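/- Classical bound: for any even N ≥ 2, any k ≥ 3, and any assignment of classical spins σ_a^{(i)} ∈ {−1,+1} (for i = 1,…,N, a = 0,…,k−1), the quantity B = (2/k)·∑_{a,b=0}^{k−1} ∑_{i≠j} σ_a^{(i)} σ_b^{(j)} cos(π(a−b)/k) satisfies B ≥ −2N/(k·sin²(π/(2k))); moreover this bound is also satisfied by all convex mixtures (local-hidden-variable models), and it is attained. -/

import Mathlib

open Real

/-- The Bell expression `B = (2/k) ∑_{a,b} ∑_{i≠j} σ_a⁽ⁱ⁾ σ_b⁽ʲ⁾ cos(π(a-b)/k)`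
for a deterministic local strategy `σ`. -/
noncomputable def bellValue (N k : ℕ) (σ : Fin N → Fin k → ℝ) : ℝ :=
  (2 / (k : ℝ)) * ∑ a : Fin k, ∑ b : Fin k, ∑ i : Fin N, ∑ j : Fin N,
    if i ≠ j then σ i a * σ j b * Real.cos (π * ((a : ℝ) - (b : ℝ)) / k) else 0

namespace ChainedBellAux
open Finset

lemma integral_abs_cos (c : ℝ) : ∫ t in c..(c + π), |Real.cos t| = 2 := by
  have hper : Function.Periodic (fun t => |Real.cos t|) π := by
    intro x; simp [Real.cos_add_pi, abs_neg]
  rw [hper.intervalIntegral_add_eq c (-(π/2))]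
  have : ∫ t in (-(π/2))..(-(π/2) + π), |Real.cos t| = ∫ t in (-(π/2))..(-(π/2) + π), Real.cos t := by
    apply intervalIntegral.integral_congr
    intro x hx
    rw [Set.uIcc_of_le (by linarith [Real.pi_pos])] at hx
    exact abs_of_nonneg (Real.cos_nonneg_of_mem_Icc ⟨by linarith [hx.1], by linarith [hx.2]⟩)
  rw [this, integral_cos]
  have h2 : -(π/2) + π = π/2 := by ring
  rw [h2]; norm_num

lemma sin_bound_pos {k : ℕ} (hk : 1 ≤ k) : 0 < Real.sin (π / (2 * k)) := by
  have hk0 : (0:ℝ) < k := by exact_mod_cast hk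
  have hk1 : (1:ℝ) ≤ k := by exact_mod_cast hk
  apply Real.sin_pos_of_pos_of_lt_pi
  · positivity
  · rw [div_lt_iff₀ (by nlinarith)]
    nlinarith [Real.pi_pos]

lemma sum_abs_cos {k : ℕ} (hk : 1 ≤ k) (φ : ℝ) :
    ∑ a ∈ range k, |Real.cos (π * a / k - φ)| ≤ 1 / Real.sin (π / (2 * k)) := by
  have hk0 : (0:ℝ) < k := by exact_mod_cast hk
  set δ := π / (2 * k) with hδ
  have hδpos : 0 < Real.sin δ := sin_bound_pos hk
  set x : ℕ → ℝ := fun a => π * a / k - δ - φ with hx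
  have hstep : ∀ a : ℕ, x (a + 1) = x a + π / k := by
    intro a; simp only [hx]; push_cast; field_simp; ring
  have key : ∀ a : ℕ, 2 * Real.sin δ * |Real.cos (π * a / k - φ)|
      = |Real.sin (x (a+1)) - Real.sin (x a)| := by
    intro a
    set u := π * a / k - φ with hu
    have h1 : x (a+1) = u + δ := by
      rw [hstep]; simp only [hx, hu]; ring
    have h2 : x a = u - δ := by simp only [hx, hu]; ring
    have hfla : ∀ v d : ℝ, Real.sin (v + d) - Real.sin (v - d) = 2 * Real.sin d * Real.cos v := by
      intro v d; rw [Real.sin_add, Real.sin_sub]; ring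
    rw [h1, h2, hfla u δ, abs_mul, abs_of_nonneg (by positivity : (0:ℝ) ≤ 2 * Real.sin δ)]
  have hle : ∀ a : ℕ, |Real.sin (x (a+1)) - Real.sin (x a)| ≤ ∫ t in (x a)..(x (a+1)), |Real.cos t| := by
    intro a
    have hpk : 0 < π / (k:ℝ) := by positivity
    have hab : x a ≤ x (a+1) := by rw [hstep]; linarith
    calc |Real.sin (x (a+1)) - Real.sin (x a)| = |∫ t in (x a)..(x (a+1)), Real.cos t| := by
          rw [integral_cos]
      _ ≤ _ := intervalIntegral.abs_integral_le_integral_abs hab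
  have hsum : ∑ a ∈ range k, ∫ t in (x a)..(x (a+1)), |Real.cos t| = ∫ t in (x 0)..(x k), |Real.cos t| :=
    intervalIntegral.sum_integral_adjacent_intervals (fun i _ =>
      (Real.continuous_cos.abs).intervalIntegrable _ _)
  have hxk : x k = x 0 + π := by
    simp only [hx]; push_cast; field_simp; ring
  have htotal : ∑ a ∈ range k, |Real.sin (x (a+1)) - Real.sin (x a)| ≤ 2 := by
    calc ∑ a ∈ range k, |Real.sin (x (a+1)) - Real.sin (x a)|
        ≤ ∑ a ∈ range k, ∫ t in (x a)..(x (a+1)), |Real.cos t| := Finset.sum_le_sum (fun a _ => hle a)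
      _ = ∫ t in (x 0)..(x k), |Real.cos t| := hsum
      _ = 2 := by rw [hxk, integral_abs_cos]
  have h2 : 2 * Real.sin δ * ∑ a ∈ range k, |Real.cos (π * a / k - φ)| ≤ 2 := by
    rw [Finset.mul_sum]
    calc ∑ a ∈ range k, 2 * Real.sin δ * |Real.cos (π * a / k - φ)|
        = ∑ a ∈ range k, |Real.sin (x (a+1)) - Real.sin (x a)| :=
          Finset.sum_congr rfl (fun a _ => key a)
      _ ≤ 2 := htotal
  rw [le_div_iff₀ hδpos]
  nlinarith [h2]

lemma quad_form_eq {k : ℕ} (hk : 1 ≤ k) (x : Fin k → ℝ) :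
    ∑ a : Fin k, ∑ b : Fin k, x a * x b * Real.cos (π * ((a:ℝ) - (b:ℝ)) / k)
    = (∑ a : Fin k, x a * Real.cos (π * a / k))^2 + (∑ a : Fin k, x a * Real.sin (π * a / k))^2 := by
  have hk0 : (k:ℝ) ≠ 0 := by
    have : (0:ℝ) < k := by exact_mod_cast hk
    exact this.ne'
  have hcos : ∀ a b : Fin k, Real.cos (π * ((a:ℝ)-(b:ℝ))/k)
      = Real.cos (π*(a:ℝ)/k) * Real.cos (π*(b:ℝ)/k) + Real.sin (π*(a:ℝ)/k) * Real.sin (π*(b:ℝ)/k) := by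
    intro a b
    rw [show π * ((a:ℝ)-(b:ℝ))/k = π*(a:ℝ)/k - π*(b:ℝ)/k by field_simp, Real.cos_sub]
  simp_rw [hcos]
  rw [sq, sq, Finset.sum_mul_sum, Finset.sum_mul_sum, ← Finset.sum_add_distrib]
  apply Finset.sum_congr rfl; intro a _
  rw [← Finset.sum_add_distrib]
  exact Finset.sum_congr rfl (fun b _ => by ring)

lemma strategy_bound {k : ℕ} (hk : 1 ≤ k) (ε : Fin k → ℝ) (hε : ∀ a, ε a = 1 ∨ ε a = -1) :
    (∑ a : Fin k, ε a * Real.cos (π * a / k))^2 + (∑ a : Fin k, ε a * Real.sin (π * a / k))^2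
      ≤ 1 / Real.sin (π / (2*k)) ^ 2 := by
  set X := ∑ a : Fin k, ε a * Real.cos (π * a / k) with hX
  set Y := ∑ a : Fin k, ε a * Real.sin (π * a / k) with hY
  set s := Real.sin (π/(2*(k:ℝ))) with hs
  have hspos : 0 < s := sin_bound_pos hk
  by_cases hz : X = 0 ∧ Y = 0
  · rw [hz.1, hz.2]
    norm_num
    positivity
  · set z : ℂ := ⟨X, Y⟩ with hzdef
    have hz0 : z ≠ 0 := by
      intro h
      exact hz ⟨congrArg Complex.re h, congrArg Complex.im h⟩
    set r := ‖z‖ with hr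
    have hrpos : 0 < r := by
      rw [hr]; exact (norm_pos_iff.mpr hz0)
    set φ := Complex.arg z with hφ
    have hXr : X = r * Real.cos φ := by
      rw [hφ, Complex.cos_arg hz0]
      field_simp [hr]
      exact mul_comm _ _
    have hYr : Y = r * Real.sin φ := by
      rw [hφ, Complex.sin_arg]
      field_simp [hr]
      exact mul_comm _ _
    have hr2 : r^2 = X^2 + Y^2 := by
      rw [hr, Complex.sq_norm, Complex.normSq_apply]; simp [hzdef]; ring
    have hkey : X^2 + Y^2 = ∑ a : Fin k, ε a * (r * Real.cos (π*a/k - φ)) := by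
      have e1 : X^2 = ∑ a : Fin k, ε a * Real.cos (π*a/k) * X := by
        rw [sq, hX, Finset.sum_mul]
      have e2 : Y^2 = ∑ a : Fin k, ε a * Real.sin (π*a/k) * Y := by
        rw [sq, hY, Finset.sum_mul]
      rw [e1, e2, ← Finset.sum_add_distrib]
      apply Finset.sum_congr rfl
      intro a _
      rw [Real.cos_sub]
      rw [hXr, hYr]; ring
    have hbound : X^2 + Y^2 ≤ r * (1/s) := by
      rw [hkey]
      have h1 : ∀ a : Fin k, ε a * (r * Real.cos (π*a/k - φ)) ≤ r * |Real.cos (π*a/k - φ)| := by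
        intro a
        have habs : |ε a| = 1 := by rcases hε a with h | h <;> simp [h]
        calc ε a * (r * Real.cos (π*a/k - φ)) ≤ |ε a * (r * Real.cos (π*a/k - φ))| := le_abs_self _
          _ = r * |Real.cos (π*a/k - φ)| := by
              rw [abs_mul, habs, one_mul, abs_mul, abs_of_pos hrpos]
      calc ∑ a : Fin k, ε a * (r * Real.cos (π*a/k - φ))
          ≤ ∑ a : Fin k, r * |Real.cos (π*a/k - φ)| := Finset.sum_le_sum (fun a _ => h1 a)
        _ = r * ∑ a : Fin k, |Real.cos (π*a/k - φ)| := by rw [Finset.mul_sum]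
        _ ≤ r * (1/s) := by
            apply mul_le_mul_of_nonneg_left _ hrpos.le
            rw [show (∑ a : Fin k, |Real.cos (π*(a:ℝ)/k - φ)|)
                = ∑ a ∈ range k, |Real.cos (π*(a:ℝ)/k - φ)| from
              Fin.sum_univ_eq_sum_range (fun a => |Real.cos (π*(a:ℝ)/k - φ)|) k]
            exact sum_abs_cos hk φ
    have hrle : r ≤ 1/s := by
      have : r^2 ≤ r * (1/s) := by rw [hr2]; exact hbound
      nlinarith
    calc X^2 + Y^2 = r^2 := hr2.symm
      _ ≤ (1/s)^2 := by nlinarith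
      _ = 1/s^2 := by rw [div_pow, one_pow]

lemma ones_sum {k : ℕ} (hk : 3 ≤ k) :
    (∑ a : Fin k, Real.cos (π*(a:ℝ)/k))^2 + (∑ a : Fin k, Real.sin (π*(a:ℝ)/k))^2
      = 1 / Real.sin (π/(2*(k:ℝ)))^2 := by
  have hk0 : (0:ℝ) < k := by exact_mod_cast (by omega : 0 < k)
  have hkne : (k:ℝ) ≠ 0 := hk0.ne'
  have h3 : (3:ℝ) ≤ k := by exact_mod_cast hk
  set θ := π / (k:ℝ) with hθ
  have hθpos : 0 < θ := by positivity
  have hθlt : θ < π := by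
    rw [hθ, div_lt_iff₀ hk0]
    nlinarith [Real.pi_pos]
  have hkC : (k:ℂ) ≠ 0 := by exact_mod_cast hkne
  set w : ℂ := Complex.exp ((θ:ℂ) * Complex.I) with hw
  have hwim : w.im = Real.sin θ := by
    rw [hw]; exact Complex.exp_ofReal_mul_I_im θ
  have hwre : w.re = Real.cos θ := by
    rw [hw]; exact Complex.exp_ofReal_mul_I_re θ
  have hw1 : w ≠ 1 := by
    intro h
    have : Real.sin θ = 0 := by rw [← hwim, h]; simp
    exact (Real.sin_pos_of_pos_of_lt_pi hθpos hθlt).ne' this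
  have hwk : w ^ k = -1 := by
    rw [hw, ← Complex.exp_nat_mul]
    rw [show (k:ℂ) * ((θ:ℂ) * Complex.I) = (π:ℂ) * Complex.I by
      rw [hθ]; push_cast; field_simp]
    exact Complex.exp_pi_mul_I
  have hgeom : ∑ a ∈ range k, w ^ a = -2 / (w - 1) := by
    rw [geom_sum_eq hw1, hwk]; ring_nf
  set u : ℂ := ∑ a ∈ range k, w ^ a with hu
  have hure : u.re = ∑ a : Fin k, Real.cos (π*(a:ℝ)/k) := by
    rw [hu, Complex.re_sum, Fin.sum_univ_eq_sum_range (fun a => Real.cos (π*(a:ℝ)/k)) k]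
    apply Finset.sum_congr rfl
    intro a _
    rw [hw, ← Complex.exp_nat_mul,
      show (a:ℂ) * ((θ:ℂ) * Complex.I) = ((π*(a:ℝ)/k : ℝ):ℂ) * Complex.I by
        rw [hθ]; push_cast; field_simp]
    exact Complex.exp_ofReal_mul_I_re _
  have huim : u.im = ∑ a : Fin k, Real.sin (π*(a:ℝ)/k) := by
    rw [hu, Complex.im_sum, Fin.sum_univ_eq_sum_range (fun a => Real.sin (π*(a:ℝ)/k)) k]
    apply Finset.sum_congr rfl
    intro a _
    rw [hw, ← Complex.exp_nat_mul,
      show (a:ℂ) * ((θ:ℂ) * Complex.I) = ((π*(a:ℝ)/k : ℝ):ℂ) * Complex.I by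
        rw [hθ]; push_cast; field_simp]
    exact Complex.exp_ofReal_mul_I_im _
  have hnormu : Complex.normSq u = 4 / Complex.normSq (w - 1) := by
    rw [hgeom, Complex.normSq_div]
    norm_num
  have hden : Complex.normSq (w - 1) = 2 - 2 * Real.cos θ := by
    rw [Complex.normSq_apply]
    simp [Complex.sub_re, Complex.sub_im, hwre, hwim]
    nlinarith [Real.sin_sq_add_cos_sq θ]
  have hhalf : Real.cos θ = 1 - 2 * Real.sin (π/(2*(k:ℝ)))^2 := by
    have : θ = 2 * (π/(2*(k:ℝ))) := by rw [hθ]; field_simp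
    rw [this, Real.cos_two_mul]
    nlinarith [Real.sin_sq_add_cos_sq (π/(2*(k:ℝ)))]
  have hspos : 0 < Real.sin (π/(2*(k:ℝ))) := by
    apply Real.sin_pos_of_pos_of_lt_pi
    · positivity
    · rw [div_lt_iff₀ (by nlinarith)]
      nlinarith [Real.pi_pos]
  have : Complex.normSq u = u.re^2 + u.im^2 := by
    rw [Complex.normSq_apply]; ring
  rw [← hure, ← huim, ← this, hnormu, hden, hhalf]
  rw [show (2:ℝ) - 2*(1 - 2 * Real.sin (π/(2*(k:ℝ)))^2) = 4 * Real.sin (π/(2*(k:ℝ)))^2 by ring]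
  rw [div_eq_div_iff (by nlinarith) (by nlinarith)]
  ring

lemma bell_decomp {N k : ℕ} (hk : 1 ≤ k) (σ : Fin N → Fin k → ℝ) :
    bellValue N k σ = (2/(k:ℝ)) * (
      ((∑ a : Fin k, (∑ i, σ i a) * Real.cos (π*(a:ℝ)/k))^2
        + (∑ a : Fin k, (∑ i, σ i a) * Real.sin (π*(a:ℝ)/k))^2)
      - ∑ i : Fin N, ((∑ a : Fin k, σ i a * Real.cos (π*(a:ℝ)/k))^2
        + (∑ a : Fin k, σ i a * Real.sin (π*(a:ℝ)/k))^2)) := by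
  have inner : ∀ (f g : Fin N → ℝ) (c : ℝ), (∑ i, ∑ j, if i ≠ j then f i * g j * c else 0)
      = (∑ i, f i) * (∑ j, g j) * c - ∑ i, f i * g i * c := by
    intro f g c
    have h1 : ∀ i : Fin N, (∑ j, if i ≠ j then f i * g j * c else 0)
        = (∑ j, f i * g j * c) - f i * g i * c := by
      intro i
      have hpt : ∀ j : Fin N, (if i ≠ j then f i * g j * c else 0)
          = f i * g j * c - (if i = j then f i * g j * c else 0) := by
        intro j; by_cases h : i = j <;> simp [h]
      rw [Finset.sum_congr rfl (fun j _ => hpt j), Finset.sum_sub_distrib, Finset.sum_ite_eq]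
      simp
    rw [Finset.sum_congr rfl (fun i _ => h1 i), Finset.sum_sub_distrib]
    congr 1
    rw [Finset.sum_mul_sum, Finset.sum_mul]
    exact Finset.sum_congr rfl (fun i _ => by rw [Finset.sum_mul])
  unfold bellValue
  congr 1
  have step1 : ∀ a b : Fin k, (∑ i, ∑ j, if i ≠ j then σ i a * σ j b * Real.cos (π * ((a:ℝ) - (b:ℝ)) / k) else 0)
      = (∑ i, σ i a) * (∑ j, σ j b) * Real.cos (π * ((a:ℝ) - (b:ℝ)) / k)
        - ∑ i, σ i a * σ i b * Real.cos (π * ((a:ℝ) - (b:ℝ)) / k) := by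
    intro a b
    exact inner (fun i => σ i a) (fun j => σ j b) _
  calc ∑ a : Fin k, ∑ b : Fin k, ∑ i, ∑ j, (if i ≠ j then σ i a * σ j b * Real.cos (π * ((a:ℝ) - (b:ℝ)) / k) else 0)
      = ∑ a : Fin k, ∑ b : Fin k, ((∑ i, σ i a) * (∑ j, σ j b) * Real.cos (π * ((a:ℝ) - (b:ℝ)) / k)
          - ∑ i, σ i a * σ i b * Real.cos (π * ((a:ℝ) - (b:ℝ)) / k)) := by
        exact Finset.sum_congr rfl (fun a _ => Finset.sum_congr rfl (fun b _ => step1 a b))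
    _ = (∑ a : Fin k, ∑ b : Fin k, (∑ i, σ i a) * (∑ j, σ j b) * Real.cos (π * ((a:ℝ) - (b:ℝ)) / k))
          - ∑ a : Fin k, ∑ b : Fin k, ∑ i, σ i a * σ i b * Real.cos (π * ((a:ℝ) - (b:ℝ)) / k) := by
        rw [← Finset.sum_sub_distrib]
        exact Finset.sum_congr rfl (fun a _ => by rw [← Finset.sum_sub_distrib])
    _ = _ := by
        congr 1
        · exact quad_form_eq hk (fun a => ∑ i, σ i a)
        · calc (∑ a : Fin k, ∑ b : Fin k, ∑ i, σ i a * σ i b * Real.cos (π * ((a:ℝ) - (b:ℝ)) / k))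
              = ∑ a : Fin k, ∑ i, ∑ b : Fin k, σ i a * σ i b * Real.cos (π * ((a:ℝ) - (b:ℝ)) / k) :=
                Finset.sum_congr rfl (fun a _ => Finset.sum_comm)
            _ = ∑ i, ∑ a : Fin k, ∑ b : Fin k, σ i a * σ i b * Real.cos (π * ((a:ℝ) - (b:ℝ)) / k) :=
                Finset.sum_comm
            _ = _ := Finset.sum_congr rfl (fun i _ => quad_form_eq hk (fun a => σ i a))

lemma attain {N k : ℕ} (hNeven : Even N) (hk : 3 ≤ k) :
    bellValue N k (fun i _ => (-1:ℝ)^(i:ℕ))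
      = -(2*(N:ℝ)) / ((k:ℝ) * Real.sin (π/(2*(k:ℝ)))^2) := by
  have hk1 : 1 ≤ k := by omega
  rw [bell_decomp hk1]
  have hS : (∑ i : Fin N, (-1:ℝ)^(i:ℕ)) = 0 := by
    rw [Fin.sum_univ_eq_sum_range (fun i => (-1:ℝ)^i) N, geom_sum_eq (by norm_num) N,
      hNeven.neg_one_pow]
    norm_num
  have hterm : ∀ i : Fin N, (∑ a : Fin k, (-1:ℝ)^(i:ℕ) * Real.cos (π*(a:ℝ)/k))^2
      + (∑ a : Fin k, (-1:ℝ)^(i:ℕ) * Real.sin (π*(a:ℝ)/k))^2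
      = 1 / Real.sin (π/(2*(k:ℝ)))^2 := by
    intro i
    rw [← Finset.mul_sum, ← Finset.mul_sum, mul_pow, mul_pow,
      show ((-1:ℝ)^(i:ℕ))^2 = 1 by
        rcases Nat.even_or_odd (i:ℕ) with h|h <;> simp [h.neg_one_pow],
      one_mul, one_mul]
    exact ones_sum hk
  simp only [hS, zero_mul, Finset.sum_const_zero]
  rw [Finset.sum_congr rfl (fun i _ => hterm i), Finset.sum_const, Finset.card_univ,
    Fintype.card_fin, nsmul_eq_mul]
  have hk0 : (0:ℝ) < k := by exact_mod_cast (by omega : 0 < k)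
  have hkne : (k:ℝ) ≠ 0 := hk0.ne'
  have hsne : Real.sin (π/(2*(k:ℝ))) ≠ 0 := (sin_bound_pos hk1).ne'
  field_simp
  ring

end ChainedBellAux

open ChainedBellAux Finset in
/-- Classical bound: for even `N ≥ 2` and `k ≥ 3`, every deterministic assignment of
classical spins `σ_a⁽ⁱ⁾ ∈ {±1}` satisfies `B ≥ -2N/(k sin²(π/(2k)))`; the same bound
holds for all convex mixtures of deterministic strategies (local-hidden-variable
models); and the bound is attained. -/
theorem classical_bound_chained_bell (N k : ℕ) (hN : 2 ≤ N) (hNeven : Even N)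
    (hk : 3 ≤ k) :
    (∀ σ : Fin N → Fin k → ℝ, (∀ i a, σ i a = 1 ∨ σ i a = -1) →
      -(2 * (N : ℝ)) / ((k : ℝ) * Real.sin (π / (2 * k)) ^ 2) ≤ bellValue N k σ) ∧
    (∀ (Λ : Type) [Fintype Λ] (p : Λ → ℝ) (σ : Λ → Fin N → Fin k → ℝ),
      (∀ l, 0 ≤ p l) → (∑ l, p l) = 1 →
      (∀ l i a, σ l i a = 1 ∨ σ l i a = -1) →
      -(2 * (N : ℝ)) / ((k : ℝ) * Real.sin (π / (2 * k)) ^ 2)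
        ≤ ∑ l, p l * bellValue N k (σ l)) ∧
    (∃ σ : Fin N → Fin k → ℝ, (∀ i a, σ i a = 1 ∨ σ i a = -1) ∧
      bellValue N k σ = -(2 * (N : ℝ)) / ((k : ℝ) * Real.sin (π / (2 * k)) ^ 2)) := by
  have hk1 : 1 ≤ k := by omega
  have hk0 : (0:ℝ) < k := by exact_mod_cast (by omega : 0 < k)
  have hkne : (k:ℝ) ≠ 0 := hk0.ne'
  have hspos : 0 < Real.sin (π/(2*(k:ℝ))) := sin_bound_pos hk1
  have hsne : Real.sin (π/(2*(k:ℝ))) ≠ 0 := hspos.ne'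
  have P1 : ∀ σ : Fin N → Fin k → ℝ, (∀ i a, σ i a = 1 ∨ σ i a = -1) →
      -(2 * (N : ℝ)) / ((k : ℝ) * Real.sin (π / (2 * k)) ^ 2) ≤ bellValue N k σ := by
    intro σ hσ
    rw [bell_decomp hk1]
    set QS := (∑ a : Fin k, (∑ i, σ i a) * Real.cos (π*(a:ℝ)/k))^2
      + (∑ a : Fin k, (∑ i, σ i a) * Real.sin (π*(a:ℝ)/k))^2 with hQSdef
    have hQS : 0 ≤ QS := by positivity
    have hD : (∑ i : Fin N, ((∑ a : Fin k, σ i a * Real.cos (π*(a:ℝ)/k))^2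
        + (∑ a : Fin k, σ i a * Real.sin (π*(a:ℝ)/k))^2))
        ≤ (N:ℝ) * (1 / Real.sin (π/(2*(k:ℝ)))^2) := by
      calc (∑ i : Fin N, ((∑ a : Fin k, σ i a * Real.cos (π*(a:ℝ)/k))^2
            + (∑ a : Fin k, σ i a * Real.sin (π*(a:ℝ)/k))^2))
          ≤ ∑ _i : Fin N, (1 / Real.sin (π/(2*(k:ℝ)))^2) :=
            Finset.sum_le_sum (fun i _ => strategy_bound hk1 (σ i) (hσ i))
        _ = (N:ℝ) * (1 / Real.sin (π/(2*(k:ℝ)))^2) := by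
            rw [Finset.sum_const, Finset.card_univ, Fintype.card_fin, nsmul_eq_mul]
    have h2k : (0:ℝ) ≤ 2/(k:ℝ) := by positivity
    have hmul : (2/(k:ℝ)) * (-( (N:ℝ) * (1 / Real.sin (π/(2*(k:ℝ)))^2)))
        ≤ (2/(k:ℝ)) * (QS - ∑ i : Fin N, ((∑ a : Fin k, σ i a * Real.cos (π*(a:ℝ)/k))^2
            + (∑ a : Fin k, σ i a * Real.sin (π*(a:ℝ)/k))^2)) := by
      apply mul_le_mul_of_nonneg_left _ h2k
      have h := sub_le_sub hQS hD
      rw [zero_sub] at h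
      exact h
    have heq : -(2 * (N:ℝ)) / ((k:ℝ) * Real.sin (π / (2 * (k:ℝ))) ^ 2)
        = (2/(k:ℝ)) * (-( (N:ℝ) * (1 / Real.sin (π/(2*(k:ℝ)))^2))) := by
      field_simp
    rw [heq]
    exact hmul
  refine ⟨P1, ?_, ?_⟩
  · intro Λ _ p σ hp hsum hσ
    calc -(2 * (N : ℝ)) / ((k : ℝ) * Real.sin (π / (2 * k)) ^ 2)
        = ∑ l, p l * (-(2 * (N : ℝ)) / ((k : ℝ) * Real.sin (π / (2 * k)) ^ 2)) := by
          rw [← Finset.sum_mul, hsum, one_mul]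
      _ ≤ ∑ l, p l * bellValue N k (σ l) :=
          Finset.sum_le_sum (fun l _ => mul_le_mul_of_nonneg_left (P1 (σ l) (hσ l)) (hp l))
  · refine ⟨fun i _ => (-1:ℝ)^(i:ℕ), ?_, ?_⟩
    · intro i a
      rcases Nat.even_or_odd (i:ℕ) with h|h
      · left; exact h.neg_one_pow
      · right; exact h.neg_one_pow
    · exact attain hNeven hk
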